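/- arXiv:1404.3494 — 2 statements merged into one kernel-verified Lean document; each statement's English description precedes it below -/
import Mathlib

section
/- For each c ∈ {1, 3, 5, 11, 29}, the Legendre-like polynomial F(n) = 2n² + c is recursively-factorable. -/
/-- A polynomial `F` with integer coefficients (here given by its value function) is
*recursively-factorable* if for every `n ∈ ℤ` and all integers `p, q` with `F(n) = p·q`,
`|p| ≠ 1` and `|q| ≠ 1`, there exists `r ∈ ℤ` with `|F(r)| < |F(n)|` and `r ≡ n (mod |p|)`
or `r ≡ n (mod |q|)` (congruence mod 0 meaning equality, which is exactly divisibility of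
`r - n` by `p` resp. `q`). -/
def RecursivelyFactorable (F : ℤ → ℤ) : Prop :=
  ∀ n p q : ℤ, F n = p * q → |p| ≠ 1 → |q| ≠ 1 →
    ∃ r : ℤ, |F r| < |F n| ∧ (p ∣ (r - n) ∨ q ∣ (r - n))

lemma aux_small (c n p q : ℤ) (hF : 2 * n ^ 2 + c = p * q) (hpq : |p| ≤ |q|)
    (hp2 : 2 ≤ |p|) (hbig : c < 2 * n ^ 2) (hc : 0 < c) :
    ∃ r : ℤ, |2 * r ^ 2 + c| < |2 * n ^ 2 + c| ∧ p ∣ r - n := by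
  have hmpos : 0 < p.natAbs := by
    have := hp2; rw [Int.abs_eq_natAbs] at this; omega
  refine ⟨Int.bmod n p.natAbs, ?_, ?_⟩
  · have h1 : -((p.natAbs : ℤ) / 2) ≤ Int.bmod n p.natAbs := Int.le_bmod hmpos
    have h2 : Int.bmod n p.natAbs < ((p.natAbs : ℤ) + 1) / 2 := Int.bmod_lt hmpos
    set r := Int.bmod n p.natAbs with hr
    have habs : 2 * |r| ≤ (p.natAbs : ℤ) := by
      rcases abs_cases r with ⟨e, _⟩ | ⟨e, _⟩ <;> omega
    have hpa : (p.natAbs : ℤ) = |p| := (Int.abs_eq_natAbs p).symm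
    have h4 : 4 * r ^ 2 ≤ |p| ^ 2 := by
      rw [← hpa]
      have := mul_le_mul habs habs (by positivity) (by positivity)
      have hra : |r| * |r| = r ^ 2 := by rw [← sq, sq_abs]
      nlinarith
    have hposF : (0:ℤ) < 2 * n ^ 2 + c := by positivity
    have hFe : |p| * |q| = 2 * n ^ 2 + c := by
      rw [← abs_mul, ← hF, abs_of_pos hposF]
    have hmq : |p| ^ 2 ≤ 2 * n ^ 2 + c := by
      nlinarith [mul_le_mul_of_nonneg_left hpq (abs_nonneg p)]
    have hposR : (0:ℤ) < 2 * r ^ 2 + c := by positivity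
    rw [abs_of_pos hposF, abs_of_pos hposR]
    nlinarith
  · exact (Int.natAbs_dvd).mp (Int.dvd_bmod_sub_self)

lemma key (c : ℤ) (hc : 0 < c)
    (hprime : ∀ n : ℤ, 2 * n ^ 2 ≤ c → (2 * n ^ 2 + c = 1 ∨ Prime (2 * n ^ 2 + c))) :
    RecursivelyFactorable (fun n : ℤ => 2 * n ^ 2 + c) := by
  intro n p q hF hp hq
  simp only at hF ⊢
  have hposF : (0:ℤ) < 2 * n ^ 2 + c := by positivity
  rcases le_or_gt (2 * n ^ 2) c with hsm | hbig
  · exfalso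
    rcases hprime n hsm with h1 | hpr'
    · rw [h1] at hF
      have := IsUnit.of_mul_eq_one (a := p) q hF.symm
      rw [Int.isUnit_iff] at this
      rcases this with h | h <;> simp [h] at hp
    have hpr := hpr'.irreducible
    rcases hpr.isUnit_or_isUnit hF with h | h <;>
      rw [Int.isUnit_iff] at h <;>
      [(rcases h with h | h); (rcases h with h | h)] <;>
      simp [h] at hp hq
  · have hp0 : p ≠ 0 := by rintro rfl; simp at hF; omega
    have hq0 : q ≠ 0 := by rintro rfl; simp at hF; omega
    have hp2 : 2 ≤ |p| := by
      rcases abs_cases p with ⟨e, _⟩ | ⟨e, _⟩ <;> omega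
    have hq2 : 2 ≤ |q| := by
      rcases abs_cases q with ⟨e, _⟩ | ⟨e, _⟩ <;> omega
    rcases le_total |p| |q| with hle | hle
    · obtain ⟨r, h1, h2⟩ := aux_small c n p q hF hle hp2 hbig hc
      exact ⟨r, h1, Or.inl h2⟩
    · obtain ⟨r, h1, h2⟩ := aux_small c n q p (by rw [hF, mul_comm]) hle hq2 hbig hc
      exact ⟨r, h1, Or.inr h2⟩


/-- For each `c ∈ {1, 3, 5, 11, 29}`, the polynomial `F(n) = 2 * n ^ 2 + c` is
recursively-factorable. -/
theorem stmt_7 :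
    ∀ c : ℤ, c ∈ ({1, 3, 5, 11, 29} : Set ℤ) →
      RecursivelyFactorable (fun n : ℤ => 2 * n ^ 2 + c) := by
  intro c hc
  simp only [Set.mem_insert_iff, Set.mem_singleton_iff] at hc
  rcases hc with rfl | rfl | rfl | rfl | rfl <;>
    refine key _ (by norm_num) ?_ <;>
    intro n hn <;>
    · have h1 : -4 ≤ n := by nlinarith
      have h2 : n ≤ 4 := by nlinarith
      interval_cases n <;> revert hn <;> norm_num
end

section
/- The polynomial F(n) = 3n² + 2 is recursively-factorable, and for each c ∈ {1, 2, 5, 11, 23} the polynomial G(n) = 3n² + 3n + c is recursively-factorable. -/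
lemma exists_near (d n : ℤ) (hd : d ≠ 0) :
    ∃ r : ℤ, d ∣ (r - n) ∧ 2 * |r| ≤ |d| := by
  have he : 0 < |d| := abs_pos.mpr hd
  have hde : d ∣ |d| := (dvd_abs d d).mpr dvd_rfl
  set e := |d| with hee
  set m := n % e with hm
  have hm0 : 0 ≤ m := Int.emod_nonneg n (by omega)
  have hme : m < e := Int.emod_lt_of_pos n he
  have hdvd : e ∣ (m - n) := ⟨-(n / e), by rw [hm, Int.emod_def]; ring⟩
  by_cases h : 2 * m ≤ e
  · exact ⟨m, hde.trans hdvd, by rw [abs_of_nonneg hm0]; exact h⟩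
  · refine ⟨m - e, ?_, ?_⟩
    · have : d ∣ (m - n) := hde.trans hdvd
      have h2 : d ∣ (m - e - n) := by
        have := dvd_sub this hde
        simpa [sub_right_comm] using this
      exact h2
    · rw [abs_of_neg (by omega)]; omega

lemma exists_near_half (d n : ℤ) (hd : d ≠ 0) :
    ∃ r : ℤ, d ∣ (r - n) ∧ |2 * r + 1| ≤ |d| := by
  have he : 0 < |d| := abs_pos.mpr hd
  have hde : d ∣ |d| := (dvd_abs d d).mpr dvd_rfl
  set e := |d| with hee
  set m := n % e with hm
  have hm0 : 0 ≤ m := Int.emod_nonneg n (by omega)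
  have hme : m < e := Int.emod_lt_of_pos n he
  have hdvd : e ∣ (m - n) := ⟨-(n / e), by rw [hm, Int.emod_def]; ring⟩
  by_cases h : 2 * m + 1 ≤ e
  · exact ⟨m, hde.trans hdvd, by rw [abs_of_nonneg (by omega)]; omega⟩
  · refine ⟨m - e, ?_, ?_⟩
    · have : d ∣ (m - n) := hde.trans hdvd
      have h2 : d ∣ (m - e - n) := by
        have := dvd_sub this hde
        simpa [sub_right_comm] using this
      exact h2
    · rw [abs_of_nonpos (by omega)]; omega

/-- From a nontrivial factorization pick the smaller factor. -/
lemma get_d (p q v : ℤ) (hv : 0 < v) (h : v = p * q) (hp1 : |p| ≠ 1) (hq1 : |q| ≠ 1) :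
    ∃ d : ℤ, (d = p ∨ d = q) ∧ 2 ≤ |d| ∧ d ^ 2 ≤ v ∧ d ∣ v := by
  have hp0 : p ≠ 0 := by rintro rfl; simp at h; omega
  have hq0 : q ≠ 0 := by rintro rfl; simp at h; omega
  have hp2 : 2 ≤ |p| := by have := abs_pos.mpr hp0; omega
  have hq2 : 2 ≤ |q| := by have := abs_pos.mpr hq0; omega
  have habs : |p| * |q| = v := by rw [← abs_mul, ← h, abs_of_pos hv]
  rcases le_total |p| |q| with hle | hle
  · exact ⟨p, Or.inl rfl, hp2, by nlinarith [sq_abs p], ⟨q, h⟩⟩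
  · exact ⟨q, Or.inr rfl, hq2, by nlinarith [sq_abs q], ⟨p, by rw [h]; ring⟩⟩

lemma coreF (n d : ℤ) (hd2 : 2 ≤ |d|) (hdd : d ∣ 3 * n ^ 2 + 2)
    (hdsq : d ^ 2 ≤ 3 * n ^ 2 + 2) :
    ∃ r : ℤ, |3 * r ^ 2 + 2| < |3 * n ^ 2 + 2| ∧ d ∣ (r - n) := by
  have hd0 : d ≠ 0 := by rintro rfl; simp at hd2
  by_cases hn : 2 ≤ |n|
  · obtain ⟨r, hdvd, hr⟩ := exists_near d n hd0
    refine ⟨r, ?_, hdvd⟩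
    have h1 : 4 * r ^ 2 ≤ d ^ 2 := by nlinarith [sq_abs r, sq_abs d, abs_nonneg r, abs_nonneg d]
    have h2 : 4 ≤ n ^ 2 := by nlinarith [sq_abs n]
    have h3 : r ^ 2 < n ^ 2 := by nlinarith
    rw [abs_of_pos (by positivity), abs_of_pos (by positivity)]
    linarith
  · exfalso
    have hd4 : 4 ≤ d ^ 2 := by nlinarith [sq_abs d]
    have hn1 : n = -1 ∨ n = 0 ∨ n = 1 := by
      rcases abs_cases n with ⟨h, _⟩ | ⟨h, _⟩ <;> omega
    obtain ⟨k, hk⟩ := hdd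
    rcases hn1 with h | h | h <;> subst h <;> norm_num at hk hdsq <;>
      [skip; omega; skip] <;>
      · have hdle : |d| ≤ 2 := by nlinarith [sq_abs d]
        have hd' : d = 2 ∨ d = -2 := by rcases abs_cases d with ⟨h, _⟩ | ⟨h, _⟩ <;> omega
        rcases hd' with h | h <;> subst h <;> omega

lemma coreG (c : ℤ) (hc : 0 < 4 * c - 3)
    (hpr : ∀ m : ℤ, (2 * m + 1) ^ 2 ≤ 4 * c - 3 →
      3 * m ^ 2 + 3 * m + c = 1 ∨ Prime (3 * m ^ 2 + 3 * m + c)) :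
    RecursivelyFactorable (fun n : ℤ => 3 * n ^ 2 + 3 * n + c) := by
  intro n p q hpq hp1 hq1
  simp only at hpq ⊢
  have hpos : ∀ m : ℤ, 0 < 3 * m ^ 2 + 3 * m + c := by
    intro m; nlinarith [sq_nonneg (2 * m + 1)]
  obtain ⟨d, hd, hd2, hdsq, hdd⟩ := get_d p q _ (hpos n) hpq hp1 hq1
  have hd0 : d ≠ 0 := by rintro rfl; simp at hd2
  by_cases hbig : (2 * n + 1) ^ 2 ≤ 4 * c - 3
  · exfalso
    have hd4 : 4 ≤ d ^ 2 := by nlinarith [sq_abs d]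
    rcases hpr n hbig with h1 | hP
    · omega
    · have hnat : Nat.Prime (3 * n ^ 2 + 3 * n + c).natAbs :=
        Int.prime_iff_natAbs_prime.mp hP
      have hdvdn : d.natAbs ∣ (3 * n ^ 2 + 3 * n + c).natAbs :=
        Int.natAbs_dvd_natAbs.mpr hdd
      rcases hnat.eq_one_or_self_of_dvd d.natAbs hdvdn with h | h
      · have : |d| = 1 := by rw [Int.abs_eq_natAbs, h]; rfl
        omega
      · have habs : |d| = 3 * n ^ 2 + 3 * n + c := by
          rw [Int.abs_eq_natAbs, h, Int.natAbs_of_nonneg (le_of_lt (hpos n))]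
        have h2 : 2 ≤ 3 * n ^ 2 + 3 * n + c := by omega
        nlinarith [sq_abs d]
  · obtain ⟨r, hdvd, hr⟩ := exists_near_half d n hd0
    refine ⟨r, ?_, ?_⟩
    · have h1 : (2 * r + 1) ^ 2 ≤ d ^ 2 := by
        nlinarith [sq_abs (2 * r + 1), sq_abs d, abs_nonneg (2 * r + 1), abs_nonneg d]
      rw [abs_of_pos (hpos r), abs_of_pos (hpos n)]
      nlinarith
    · rcases hd with h | h <;> subst h
      · exact Or.inl hdvd
      · exact Or.inr hdvd

/-- The polynomial `F(n) = 3n² + 2` is recursively-factorable, and for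
each `c ∈ {1, 2, 5, 11, 23}` the polynomial `G(n) = 3n² + 3n + c` is
recursively-factorable. -/
theorem stmt_9 :
    RecursivelyFactorable (fun n : ℤ => 3 * n ^ 2 + 2) ∧
    ∀ c : ℤ, c ∈ ({1, 2, 5, 11, 23} : Set ℤ) →
      RecursivelyFactorable (fun n : ℤ => 3 * n ^ 2 + 3 * n + c) := by
  constructor
  · intro n p q hpq hp1 hq1
    simp only at hpq ⊢
    have hv : 0 < 3 * n ^ 2 + 2 := by positivity
    obtain ⟨d, hd, hd2, hdsq, hdd⟩ := get_d p q _ hv hpq hp1 hq1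
    obtain ⟨r, hlt, hdvd⟩ := coreF n d hd2 hdd hdsq
    refine ⟨r, hlt, ?_⟩
    rcases hd with h | h <;> subst h
    · exact Or.inl hdvd
    · exact Or.inr hdvd
  · intro c hc
    simp only [Set.mem_insert_iff, Set.mem_singleton_iff] at hc
    rcases hc with rfl | rfl | rfl | rfl | rfl <;>
      refine coreG _ (by norm_num) ?_
    all_goals {
      intro m hm
      have hb1 : 2 * m + 1 ≤ 9 := by nlinarith
      have hb2 : -9 ≤ 2 * m + 1 := by nlinarith
      have hlb : -5 ≤ m := by omega
      have hub : m ≤ 4 := by omega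
      interval_cases m <;> revert hm <;> norm_num [Int.prime_iff_natAbs_prime]
    }
end
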